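/- Let n, K ∈ ℕ with K ≥ 1, x ∈ {0,1}ⁿ, ε > 0, u ∈ ℝⁿ, and samples ĉ⁽¹⁾,…,ĉ⁽ᴷ⁾ ∈ ℝⁿ with ĉ⁽ᵏ⁾ ≤ u componentwise. Then the infimum over λ ∈ [0, ∞) of g(λ) := λε + (1/K)·Σₖ Σₐ max{ĉₐ⁽ᵏ⁾·xₐ, uₐ·xₐ − λ·(uₐ − ĉₐ⁽ᵏ⁾)} equals min{(1/K)·Σₖ (ĉ⁽ᵏ⁾)ᵀx + ε, uᵀx}. -/

import Mathlib

theorem stmt_4 (n K : ℕ) (hK : 1 ≤ K) (x u : Fin n → ℝ) (hx : ∀ a, x a = 0 ∨ x a = 1)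
    (ε : ℝ) (hε : 0 < ε) (chat : Fin K → Fin n → ℝ) (hchat : ∀ k a, chat k a ≤ u a) :
    IsGLB {y : ℝ | ∃ lam : ℝ, 0 ≤ lam ∧
        y = lam * ε + (1 / K) * ∑ k, ∑ a,
          max (chat k a * x a) (u a * x a - lam * (u a - chat k a))}
      (min ((1 / K) * (∑ k, ∑ a, chat k a * x a) + ε) (∑ a, u a * x a)) := by
  have hKR : (0:ℝ) < (K:ℝ) := by exact_mod_cast Nat.lt_of_lt_of_le Nat.zero_lt_one hK
  set A : ℝ := (1 / K) * (∑ k, ∑ a, chat k a * x a) with hA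
  set U : ℝ := ∑ a, u a * x a with hU
  have hUmem : U = 0 * ε + (1 / K) * ∑ k, ∑ a,
      max (chat k a * x a) (u a * x a - 0 * (u a - chat k a)) := by
    have h1 : ∀ k : Fin K, ∑ a, max (chat k a * x a) (u a * x a - 0 * (u a - chat k a)) = U := by
      intro k
      rw [hU]
      apply Finset.sum_congr rfl
      intro a _
      rcases hx a with h | h <;> simp [h, max_eq_right (hchat k a)]
    rw [Finset.sum_congr rfl (fun k _ => h1 k), Finset.sum_const, Finset.card_fin]
    field_simp
    rw [nsmul_eq_mul]; ring
  have hAmem : A + ε = 1 * ε + (1 / K) * ∑ k, ∑ a,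
      max (chat k a * x a) (u a * x a - 1 * (u a - chat k a)) := by
    have h1 : ∀ k : Fin K, ∑ a, max (chat k a * x a) (u a * x a - 1 * (u a - chat k a))
        = ∑ a, chat k a * x a := by
      intro k
      apply Finset.sum_congr rfl
      intro a _
      rcases hx a with h | h
      · have hc := hchat k a
        simp only [h, mul_zero, one_mul, zero_sub]
        rw [max_eq_left (by linarith)]
      · simp [h]
    rw [Finset.sum_congr rfl (fun k _ => h1 k), hA]
    ring
  constructor
  · rintro y ⟨lam, hlam, rfl⟩
    rcases le_or_gt lam 1 with h1 | h1
    · -- termwise bound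
      have hterm : ∀ k ∈ Finset.univ (α := Fin K), ∀ a ∈ Finset.univ (α := Fin n),
          (1 - lam) * (u a * x a) + lam * (chat k a * x a)
          ≤ max (chat k a * x a) (u a * x a - lam * (u a - chat k a)) := by
        intro k _ a _
        rcases hx a with h | h
        · have := hchat k a
          simp only [h, mul_zero]
          have : (0:ℝ) ≤ max 0 (0 - lam * (u a - chat k a)) := le_max_left 0 _
          linarith
        · have : u a * x a - lam * (u a - chat k a)
              = (1 - lam) * (u a * x a) + lam * (chat k a * x a) := by
            simp [h]; ring
          rw [← this]
          exact le_max_right _ _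
      have hsum : ∑ k, ∑ a, ((1 - lam) * (u a * x a) + lam * (chat k a * x a))
          ≤ ∑ k, ∑ a, max (chat k a * x a) (u a * x a - lam * (u a - chat k a)) :=
        Finset.sum_le_sum (fun k hk => Finset.sum_le_sum (hterm k hk))
      have heval : (1 / (K:ℝ)) * ∑ k, ∑ a, ((1 - lam) * (u a * x a) + lam * (chat k a * x a))
          = (1 - lam) * U + lam * A := by
        have h2 : ∀ k : Fin K, ∑ a, ((1 - lam) * (u a * x a) + lam * (chat k a * x a))
            = (1 - lam) * U + lam * ∑ a, chat k a * x a := by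
          intro k
          rw [Finset.sum_add_distrib, ← Finset.mul_sum, ← Finset.mul_sum, hU]
        rw [Finset.sum_congr rfl (fun k _ => h2 k), Finset.sum_add_distrib,
          Finset.sum_const, Finset.card_fin, ← Finset.mul_sum, hA]
        field_simp
        ring
      have hmono : (1 / (K:ℝ)) * ∑ k, ∑ a, ((1 - lam) * (u a * x a) + lam * (chat k a * x a))
          ≤ (1 / (K:ℝ)) * ∑ k, ∑ a, max (chat k a * x a) (u a * x a - lam * (u a - chat k a)) :=
        mul_le_mul_of_nonneg_left hsum (by positivity)
      have hmin : min (A + ε) U ≤ (1 - lam) * U + lam * (A + ε) := by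
        rcases le_total (A + ε) U with h | h
        · calc min (A + ε) U = (A + ε) := min_eq_left h
            _ ≤ (1 - lam) * U + lam * (A + ε) := by nlinarith
        · calc min (A + ε) U = U := min_eq_right h
            _ ≤ (1 - lam) * U + lam * (A + ε) := by nlinarith
      rw [heval] at hmono
      calc min (A + ε) U ≤ (1 - lam) * U + lam * (A + ε) := hmin
        _ = lam * ε + ((1 - lam) * U + lam * A) := by ring
        _ ≤ lam * ε + (1 / (K:ℝ)) * ∑ k, ∑ a,
            max (chat k a * x a) (u a * x a - lam * (u a - chat k a)) := by linarith
    · -- lam > 1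
      have hsum : ∑ k, ∑ a, chat k a * x a
          ≤ ∑ k, ∑ a, max (chat k a * x a) (u a * x a - lam * (u a - chat k a)) :=
        Finset.sum_le_sum (fun k _ => Finset.sum_le_sum (fun a _ => le_max_left _ _))
      have hmono : A ≤ (1 / (K:ℝ)) * ∑ k, ∑ a,
          max (chat k a * x a) (u a * x a - lam * (u a - chat k a)) := by
        rw [hA]
        exact mul_le_mul_of_nonneg_left hsum (by positivity)
      have : min (A + ε) U ≤ A + ε := min_le_left _ _
      have hle : ε ≤ lam * ε := by nlinarith
      linarith
  · intro b hb
    apply le_min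
    · exact hb ⟨1, zero_le_one, hAmem⟩
    · exact hb ⟨0, le_refl 0, hUmem⟩
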